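/- arXiv:2309.00869 — 2 statements merged into one kernel-verified Lean document; each statement's English description precedes it below -/
import Mathlib

section
/- Let U = (H_{a₁}⊗H_{b₁}) ∘ (CNOT_{a₁→s_A}⊗CNOT_{b₁→s_B}) ∘ (CNOT_{s_A→a₂}⊗CNOT_{s_B→b₂}) act on the six-qubit state |φ⁺⟩_{a₁b₁}⊗|φ⁺⟩_{a₂b₂}⊗|Ψ⟩_{s_As_B}. Then for each Bell state |Ψ⟩, the output is |α_Ψ⟩_{a₁b₁}⊗|β_Ψ⟩_{a₂b₂}⊗|Ψ⟩_{s_As_B} where (α,β) = (φ⁺,φ⁺), (ψ⁺,φ⁺), (φ⁺,ψ⁺), (ψ⁺,ψ⁺) for Ψ = φ⁺, φ⁻, ψ⁺, ψ⁻ respectively; in particular the target Bell state is unchanged and the four ancilla outcomes are pairwise orthogonal. -/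
/-- Amplitudes of the Bell state `|φ⁺⟩ = (|00⟩ + |11⟩)/√2`. -/
noncomputable def phiP : Fin 2 → Fin 2 → ℂ := fun a b =>
  if a = b then (Real.sqrt 2 : ℂ)⁻¹ else 0

/-- Amplitudes of the Bell state `|φ⁻⟩ = (|00⟩ - |11⟩)/√2`. -/
noncomputable def phiM : Fin 2 → Fin 2 → ℂ := fun a b =>
  if a = 0 ∧ b = 0 then (Real.sqrt 2 : ℂ)⁻¹
  else if a = 1 ∧ b = 1 then -(Real.sqrt 2 : ℂ)⁻¹ else 0

/-- Amplitudes of the Bell state `|ψ⁺⟩ = (|01⟩ + |10⟩)/√2`. -/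
noncomputable def psiP : Fin 2 → Fin 2 → ℂ := fun a b =>
  if a ≠ b then (Real.sqrt 2 : ℂ)⁻¹ else 0

/-- Amplitudes of the Bell state `|ψ⁻⟩ = (|01⟩ - |10⟩)/√2`. -/
noncomputable def psiM : Fin 2 → Fin 2 → ℂ := fun a b =>
  if a = 0 ∧ b = 1 then (Real.sqrt 2 : ℂ)⁻¹
  else if a = 1 ∧ b = 0 then -(Real.sqrt 2 : ℂ)⁻¹ else 0

/-- A pure `n`-qubit state, given by its amplitudes on computational basis states. -/
def QState (n : ℕ) := (Fin n → Fin 2) → ℂ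

/-- The CNOT gate with control qubit `c` and target qubit `t`,
`CNOT_{c→t} = |0⟩⟨0|_c ⊗ I_t + |1⟩⟨1|_c ⊗ X_t`. -/
def CNOT {n : ℕ} (c t : Fin n) (ψ : QState n) : QState n :=
  fun f => ψ (Function.update f t (f t + f c))

/-- The Hadamard gate `H = (1/√2)[[1,1],[1,-1]]` acting on qubit `k`. -/
noncomputable def Had {n : ℕ} (k : Fin n) (ψ : QState n) : QState n :=
  fun f => (Real.sqrt 2 : ℂ)⁻¹ *
    (ψ (Function.update f k 0) + (if f k = 1 then -1 else 1) * ψ (Function.update f k 1))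

/-- The discrimination circuit
`U = (H_{a₁} ⊗ H_{b₁}) ∘ (CNOT_{a₁→s_A} ⊗ CNOT_{b₁→s_B}) ∘ (CNOT_{s_A→a₂} ⊗ CNOT_{s_B→b₂})`,
with qubit ordering `(a₁, b₁, a₂, b₂, s_A, s_B) = (0,1,2,3,4,5)`. -/
noncomputable def circuit (ψ : QState 6) : QState 6 :=
  Had 0 (Had 1 (CNOT 0 4 (CNOT 1 5 (CNOT 4 2 (CNOT 5 3 ψ)))))

/-- Input state `|φ⁺⟩_{a₁b₁} ⊗ |φ⁺⟩_{a₂b₂} ⊗ |Ψ⟩_{s_As_B}`. -/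
noncomputable def inState (Ψ : Fin 2 → Fin 2 → ℂ) : QState 6 :=
  fun f => phiP (f 0) (f 1) * phiP (f 2) (f 3) * Ψ (f 4) (f 5)

/-- State `|α⟩_{a₁b₁} ⊗ |β⟩_{a₂b₂} ⊗ |Ψ⟩_{s_As_B}`. -/
noncomputable def outState (α β Ψ : Fin 2 → Fin 2 → ℂ) : QState 6 :=
  fun f => α (f 0) (f 1) * β (f 2) (f 3) * Ψ (f 4) (f 5)

/-- Ancilla four-qubit state `|α⟩_{a₁b₁} ⊗ |β⟩_{a₂b₂}`. -/
noncomputable def anc (α β : Fin 2 → Fin 2 → ℂ) :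
    (Fin 2 × Fin 2) × (Fin 2 × Fin 2) → ℂ :=
  fun p => α p.1.1 p.1.2 * β p.2.1 p.2.2

/-- The ancilla outcome states for the four Bell inputs `φ⁺, φ⁻, ψ⁺, ψ⁻`. -/
noncomputable def ancOut : Fin 4 → ((Fin 2 × Fin 2) × (Fin 2 × Fin 2) → ℂ) :=
  ![anc phiP phiP, anc psiP phiP, anc phiP psiP, anc psiP psiP]

private lemma sq2 : ((Real.sqrt 2 : ℝ) : ℂ) ^ 2 = 2 := by
  rw [← Complex.ofReal_pow, Real.sq_sqrt] <;> norm_num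

private lemma inv2 : ((Real.sqrt 2:ℝ):ℂ)⁻¹ = ((Real.sqrt 2:ℝ):ℂ) / 2 := by
  have h := sq2
  have hne : ((Real.sqrt 2 : ℝ) : ℂ) ≠ 0 := by
    intro h0; rw [h0] at h; norm_num at h
  field_simp; linear_combination -h

private lemma pow3 : ((Real.sqrt 2:ℝ):ℂ)^3 = 2*((Real.sqrt 2:ℝ):ℂ) := by
  linear_combination ((Real.sqrt 2:ℝ):ℂ)*sq2
private lemma pow4 : ((Real.sqrt 2:ℝ):ℂ)^4 = 4 := by
  linear_combination (((Real.sqrt 2:ℝ):ℂ)^2+2)*sq2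
private lemma pow5 : ((Real.sqrt 2:ℝ):ℂ)^5 = 4*((Real.sqrt 2:ℝ):ℂ) := by
  linear_combination (((Real.sqrt 2:ℝ):ℂ)^3+2*((Real.sqrt 2:ℝ):ℂ))*sq2

set_option maxHeartbeats 4000000 in
private lemma c1 : circuit (inState phiP) = outState phiP phiP phiP := by
  funext f
  simp only [circuit, Had, CNOT, inState, outState, Function.update_apply,
      Fin.isValue, Fin.reduceEq, reduceIte]
  obtain h0 | h0 : f 0 = 0 ∨ f 0 = 1 := by omega
  all_goals obtain h1 | h1 : f 1 = 0 ∨ f 1 = 1 := by omega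
  all_goals obtain h2 | h2 : f 2 = 0 ∨ f 2 = 1 := by omega
  all_goals obtain h3 | h3 : f 3 = 0 ∨ f 3 = 1 := by omega
  all_goals obtain h4 | h4 : f 4 = 0 ∨ f 4 = 1 := by omega
  all_goals obtain h5 | h5 : f 5 = 0 ∨ f 5 = 1 := by omega
  all_goals simp only [h0, h1, h2, h3, h4, h5, phiP, phiM, psiP, psiM,
      Fin.isValue, Fin.reduceEq, Fin.reduceAdd, reduceIte, ne_eq,
      not_true_eq_false, not_false_eq_true, and_self, and_true, true_and,
      and_false, false_and, if_true, if_false,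
      mul_zero, zero_mul, mul_one, one_mul, add_zero, zero_add, neg_neg,
      mul_neg, neg_mul, neg_zero]
  all_goals (try rfl)
  all_goals simp only [inv2]
  all_goals ring_nf
  all_goals try simp only [sq2, pow3, pow4, pow5]
  all_goals try norm_num
  all_goals try ring

set_option maxHeartbeats 4000000 in
private lemma c2 : circuit (inState phiM) = outState psiP phiP phiM := by
  funext f
  simp only [circuit, Had, CNOT, inState, outState, Function.update_apply,
      Fin.isValue, Fin.reduceEq, reduceIte]
  obtain h0 | h0 : f 0 = 0 ∨ f 0 = 1 := by omega
  all_goals obtain h1 | h1 : f 1 = 0 ∨ f 1 = 1 := by omega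
  all_goals obtain h2 | h2 : f 2 = 0 ∨ f 2 = 1 := by omega
  all_goals obtain h3 | h3 : f 3 = 0 ∨ f 3 = 1 := by omega
  all_goals obtain h4 | h4 : f 4 = 0 ∨ f 4 = 1 := by omega
  all_goals obtain h5 | h5 : f 5 = 0 ∨ f 5 = 1 := by omega
  all_goals simp only [h0, h1, h2, h3, h4, h5, phiP, phiM, psiP, psiM,
      Fin.isValue, Fin.reduceEq, Fin.reduceAdd, reduceIte, ne_eq,
      not_true_eq_false, not_false_eq_true, and_self, and_true, true_and,
      and_false, false_and, if_true, if_false,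
      mul_zero, zero_mul, mul_one, one_mul, add_zero, zero_add, neg_neg,
      mul_neg, neg_mul, neg_zero]
  all_goals (try rfl)
  all_goals simp only [inv2]
  all_goals ring_nf
  all_goals try simp only [sq2, pow3, pow4, pow5]
  all_goals try norm_num
  all_goals try ring

set_option maxHeartbeats 4000000 in
private lemma c3 : circuit (inState psiP) = outState phiP psiP psiP := by
  funext f
  simp only [circuit, Had, CNOT, inState, outState, Function.update_apply,
      Fin.isValue, Fin.reduceEq, reduceIte]
  obtain h0 | h0 : f 0 = 0 ∨ f 0 = 1 := by omega
  all_goals obtain h1 | h1 : f 1 = 0 ∨ f 1 = 1 := by omega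
  all_goals obtain h2 | h2 : f 2 = 0 ∨ f 2 = 1 := by omega
  all_goals obtain h3 | h3 : f 3 = 0 ∨ f 3 = 1 := by omega
  all_goals obtain h4 | h4 : f 4 = 0 ∨ f 4 = 1 := by omega
  all_goals obtain h5 | h5 : f 5 = 0 ∨ f 5 = 1 := by omega
  all_goals simp only [h0, h1, h2, h3, h4, h5, phiP, phiM, psiP, psiM,
      Fin.isValue, Fin.reduceEq, Fin.reduceAdd, reduceIte, ne_eq,
      not_true_eq_false, not_false_eq_true, and_self, and_true, true_and,
      and_false, false_and, if_true, if_false,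
      mul_zero, zero_mul, mul_one, one_mul, add_zero, zero_add, neg_neg,
      mul_neg, neg_mul, neg_zero]
  all_goals (try rfl)
  all_goals simp only [inv2]
  all_goals ring_nf
  all_goals try simp only [sq2, pow3, pow4, pow5]
  all_goals try norm_num
  all_goals try ring

set_option maxHeartbeats 4000000 in
private lemma c4 : circuit (inState psiM) = outState psiP psiP psiM := by
  funext f
  simp only [circuit, Had, CNOT, inState, outState, Function.update_apply,
      Fin.isValue, Fin.reduceEq, reduceIte]
  obtain h0 | h0 : f 0 = 0 ∨ f 0 = 1 := by omega
  all_goals obtain h1 | h1 : f 1 = 0 ∨ f 1 = 1 := by omega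
  all_goals obtain h2 | h2 : f 2 = 0 ∨ f 2 = 1 := by omega
  all_goals obtain h3 | h3 : f 3 = 0 ∨ f 3 = 1 := by omega
  all_goals obtain h4 | h4 : f 4 = 0 ∨ f 4 = 1 := by omega
  all_goals obtain h5 | h5 : f 5 = 0 ∨ f 5 = 1 := by omega
  all_goals simp only [h0, h1, h2, h3, h4, h5, phiP, phiM, psiP, psiM,
      Fin.isValue, Fin.reduceEq, Fin.reduceAdd, reduceIte, ne_eq,
      not_true_eq_false, not_false_eq_true, and_self, and_true, true_and,
      and_false, false_and, if_true, if_false,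
      mul_zero, zero_mul, mul_one, one_mul, add_zero, zero_add, neg_neg,
      mul_neg, neg_mul, neg_zero]
  all_goals (try rfl)
  all_goals simp only [inv2]
  all_goals ring_nf
  all_goals try simp only [sq2, pow3, pow4, pow5]
  all_goals try norm_num
  all_goals try ring

set_option maxHeartbeats 1000000 in
/-- The circuit maps each Bell input `|Ψ⟩` to `|α_Ψ⟩|β_Ψ⟩|Ψ⟩` with
`(α,β) = (φ⁺,φ⁺), (ψ⁺,φ⁺), (φ⁺,ψ⁺), (ψ⁺,ψ⁺)` for `Ψ = φ⁺, φ⁻, ψ⁺, ψ⁻`: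
the target Bell state is unchanged and the four ancilla outcomes are
pairwise orthogonal. -/
theorem circuit_discriminates_bell_states :
    circuit (inState phiP) = outState phiP phiP phiP ∧
    circuit (inState phiM) = outState psiP phiP phiM ∧
    circuit (inState psiP) = outState phiP psiP psiP ∧
    circuit (inState psiM) = outState psiP psiP psiM ∧
    ∀ i j : Fin 4, i ≠ j →
      (∑ p : (Fin 2 × Fin 2) × (Fin 2 × Fin 2), star (ancOut i p) * ancOut j p) = 0 := by
  refine ⟨c1, c2, c3, c4, ?_⟩
  intro i j hij
  fin_cases i <;> fin_cases j <;>
    first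
      | exact absurd rfl hij
      | simp [ancOut, anc, Fintype.sum_prod_type, Fin.sum_univ_two, phiP, psiP]
end

section
/- In the nondestructive Bell discrimination circuit with maximally entangled ancilla, measuring the four ancilla qubits a₁b₁a₂b₂ in the computational basis gives, for input Bell state |φ⁺⟩, nonzero probability only on outcomes {0000, 0011, 1100, 1111}, each with probability 1/4. -/
/-- The final state for input Bell state `|φ⁺⟩_{s_As_B}` with ancillas
`|φ⁺⟩_{a₁b₁} ⊗ |φ⁺⟩_{a₂b₂}`. -/
noncomputable def finalState : QState 6 :=
  circuit (fun f => phiP (f 0) (f 1) * phiP (f 2) (f 3) * phiP (f 4) (f 5))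

/-- Basis assignment on the six qubits given ancilla outcomes `x` on
`a₁,b₁,a₂,b₂` and system values `s` on `s_A,s_B`. -/
def assign (x : Fin 4 → Fin 2) (s : Fin 2 × Fin 2) : Fin 6 → Fin 2 :=
  fun i => if h : (i : ℕ) < 4 then x ⟨i, h⟩ else if (i : ℕ) = 4 then s.1 else s.2

/-- Probability of observing ancilla outcome `x = (a₁,b₁,a₂,b₂)` when measuring
the four ancilla qubits of the final state in the computational basis. -/
noncomputable def outcomeProb (x : Fin 4 → Fin 2) : ℝ :=
  ∑ s : Fin 2 × Fin 2, Complex.normSq (finalState (assign x s))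

set_option maxHeartbeats 1000000 in
/-- For input `|φ⁺⟩`, the ancilla measurement gives nonzero probability only on
outcomes `0000, 0011, 1100, 1111` (i.e. `a₁ = b₁` and `a₂ = b₂`), each with
probability `1/4`. -/
theorem outcomeProb_phiP (x : Fin 4 → Fin 2) :
    outcomeProb x = if x 0 = x 1 ∧ x 2 = x 3 then 1 / 4 else 0 := by
  have hr : Real.sqrt 2 * Real.sqrt 2 = 2 := Real.mul_self_sqrt (by norm_num)
  obtain ⟨a, b, c, d, rfl⟩ : ∃ a b c d, x = ![a, b, c, d] :=
    ⟨x 0, x 1, x 2, x 3, by funext i; fin_cases i <;> rfl⟩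
  fin_cases a <;> fin_cases b <;> fin_cases c <;> fin_cases d <;>
    simp (config := { decide := true }) [outcomeProb, finalState, circuit, Had, CNOT, assign,
      phiP, Fintype.sum_prod_type, Fin.sum_univ_succ, Function.update, Fin.ext_iff, -Fin.val_eq_zero_iff] <;>
    simp only [← Complex.ofReal_inv, ← Complex.ofReal_mul, ← Complex.ofReal_add,
      ← Complex.ofReal_neg, Complex.normSq_ofReal] <;>
    field_simp <;>
    ring_nf <;>
    rw [show (8 : ℕ) = 2 * 4 from rfl, pow_mul, Real.sq_sqrt (by norm_num : (0:ℝ) ≤ 2)] <;>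
    norm_num
end
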